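/- Suppose each fₖ: ℝ^d → ℝ is μₖ-strongly convex and Lₖ-smooth for 1 ≤ k ≤ n, and πₖ > 0. Then for any α ∈ (0, min_k (2nπₖ/(μₖ+Lₖ))], and all w, v ∈ (ℝ^d)^n, ‖w - v - α(∇F(w/(nπ)) - ∇F(v/(nπ)))‖_{π⊗1_d} ≤ (1 - Cα)‖w - v‖_{π⊗1_d}, where C = min_k μₖLₖ/(nπₖ(μₖ+Lₖ)), ∇F(w/(nπ)) = (∇f₁(w₁/(nπ₁)), …, ∇fₙ(wₙ/(nπₙ))), and ‖x‖_{π⊗1_d} = (Σₖ (1/πₖ)‖xₖ‖²)^{1/2}. -/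

import Mathlib

set_option maxHeartbeats 1000000
open Set
variable {d : ℕ}
local notation "E" => EuclideanSpace ℝ (Fin d)
local notation "⟪" x ", " y "⟫" => @inner ℝ _ _ x y

lemma fderiv_apply_eq' (f : E → ℝ) (hf : Differentiable ℝ f) (x v : E) :
    fderiv ℝ f x v = ⟪gradient f x, v⟫ := by
  have h := (hf x).hasGradientAt
  rw [hasGradientAt_iff_hasFDerivAt] at h
  rw [h.fderiv, InnerProductSpace.toDual_apply_apply]

lemma hasDerivAt_line (f : E → ℝ) (hf : Differentiable ℝ f) (x y : E) (t : ℝ) :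
    HasDerivAt (fun t : ℝ => f (x + t • (y - x)))
      ⟪gradient f (x + t • (y - x)), y - x⟫ t := by
  have hline : HasDerivAt (fun t : ℝ => x + t • (y - x)) (y - x) t := by
    simpa using ((hasDerivAt_id t).smul_const (y - x)).const_add x
  have := (hf (x + t • (y - x))).hasFDerivAt.comp_hasDerivAt t hline
  rw [fderiv_apply_eq' f hf] at this
  exact this

lemma grad_ineq (f : E → ℝ) (hf : Differentiable ℝ f)
    (hconv : ConvexOn ℝ univ f) (x y : E) :
    f x + ⟪gradient f x, y - x⟫ ≤ f y := by
  set φ : ℝ → ℝ := fun t => f (x + t • (y - x)) with hφ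
  have hφconv : ConvexOn ℝ univ φ := by
    have h1 := hconv.comp_affineMap (AffineMap.lineMap x y : ℝ →ᵃ[ℝ] E)
    have : (f ∘ (AffineMap.lineMap x y : ℝ →ᵃ[ℝ] E)) = φ := by
      funext t
      simp [hφ, AffineMap.lineMap_apply, add_comm]
    rw [this] at h1
    simpa using h1
  have hd := hasDerivAt_line f hf x y 0
  have hs := hφconv.le_slope_of_hasDerivAt (mem_univ (0:ℝ)) (mem_univ (1:ℝ))
    one_pos (by simpa using hd)
  have h0 : φ 0 = f x := by simp [hφ]
  have h1 : φ 1 = f y := by simp [hφ]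
  rw [slope_def_field] at hs
  simp only [h0, h1] at hs
  have : ⟪gradient f x, y - x⟫ ≤ f y - f x := by
    simpa [div_one] using hs
  linarith

lemma descent (f : E → ℝ) (hf : Differentiable ℝ f) {c : ℝ} (hc : 0 ≤ c)
    (hlip : ∀ a b : E, ‖gradient f a - gradient f b‖ ≤ c * ‖a - b‖) (x y : E) :
    f y ≤ f x + ⟪gradient f x, y - x⟫ + c / 2 * ‖y - x‖ ^ 2 := by
  set ψ : ℝ → ℝ := fun t => f (x + t • (y - x)) - t * ⟪gradient f x, y - x⟫
    - c / 2 * t ^ 2 * ‖y - x‖ ^ 2 with hψ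
  have hψd : ∀ t : ℝ, HasDerivAt ψ
      (⟪gradient f (x + t • (y - x)), y - x⟫ - ⟪gradient f x, y - x⟫
        - c * t * ‖y - x‖ ^ 2) t := by
    intro t
    have h1 := hasDerivAt_line f hf x y t
    have h2 : HasDerivAt (fun t : ℝ => t * ⟪gradient f x, y - x⟫)
        ⟪gradient f x, y - x⟫ t := by simpa using (hasDerivAt_id t).mul_const _
    have h3 : HasDerivAt (fun t : ℝ => c / 2 * t ^ 2 * ‖y - x‖ ^ 2)
        (c * t * ‖y - x‖ ^ 2) t := by
      have := ((hasDerivAt_pow 2 t).const_mul (c / 2)).mul_const (‖y - x‖ ^ 2)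
      refine this.congr_deriv ?_
      rw [show (2:ℕ) - 1 = 1 from rfl, pow_one]
      push_cast
      ring
    exact (h1.sub h2).sub h3
  have hmono : AntitoneOn ψ (Icc (0:ℝ) 1) := by
    apply antitoneOn_of_deriv_nonpos (convex_Icc 0 1)
    · exact fun t _ => ((hψd t).differentiableAt).continuousAt.continuousWithinAt
    · intro t ht
      exact (hψd t).differentiableAt.differentiableWithinAt
    · intro t ht
      rw [interior_Icc] at ht
      rw [(hψd t).deriv]
      have hb : ⟪gradient f (x + t • (y - x)) - gradient f x, y - x⟫
          ≤ c * t * ‖y - x‖ ^ 2 := by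
        calc ⟪gradient f (x + t • (y - x)) - gradient f x, y - x⟫
            ≤ ‖gradient f (x + t • (y - x)) - gradient f x‖ * ‖y - x‖ :=
              real_inner_le_norm _ _
          _ ≤ (c * ‖(x + t • (y - x)) - x‖) * ‖y - x‖ := by
              exact mul_le_mul_of_nonneg_right (hlip _ _) (norm_nonneg _)
          _ = c * t * ‖y - x‖ ^ 2 := by
              simp [norm_smul, abs_of_nonneg ht.1.le]; ring
      rw [inner_sub_left] at hb
      linarith
  have := hmono (Set.left_mem_Icc.2 zero_le_one) (Set.right_mem_Icc.2 zero_le_one) zero_le_one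
  simp only [hψ] at this
  simp only [zero_smul, add_zero, zero_mul, zero_pow, mul_zero, sub_zero, one_smul,
    one_mul, one_pow] at this
  have hxy : x + (y - x) = y := by abel
  rw [hxy] at this
  linarith

lemma lower_bound (f : E → ℝ) (hf : Differentiable ℝ f) (hconv : ConvexOn ℝ univ f)
    {c : ℝ} (hc : 0 < c)
    (hdesc : ∀ a b : E, f b ≤ f a + ⟪gradient f a, b - a⟫ + c / 2 * ‖b - a‖ ^ 2)
    (x y : E) :
    f x + ⟪gradient f x, y - x⟫
      + 1 / (2 * c) * ‖gradient f y - gradient f x‖ ^ 2 ≤ f y := by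
  set g := gradient f y - gradient f x with hg
  set z := y - c⁻¹ • g with hzdef
  have h1 := grad_ineq f hf hconv x z
  have h2 := hdesc y z
  have hzx : z - x = (y - x) - c⁻¹ • g := by rw [hzdef]; abel
  have hzy : z - y = -(c⁻¹ • g) := by rw [hzdef]; abel
  have e1 : ⟪gradient f x, z - x⟫
      = ⟪gradient f x, y - x⟫ - c⁻¹ * ⟪gradient f x, g⟫ := by
    rw [hzx, inner_sub_right, real_inner_smul_right]
  have e2 : ⟪gradient f y, z - y⟫ = -(c⁻¹ * ⟪gradient f y, g⟫) := by
    rw [hzy, inner_neg_right, real_inner_smul_right]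
  have e3 : ‖z - y‖ ^ 2 = c⁻¹ ^ 2 * ‖g‖ ^ 2 := by
    rw [hzy, norm_neg, norm_smul, mul_pow, Real.norm_eq_abs, sq_abs]
  have e4 : ⟪gradient f y, g⟫ - ⟪gradient f x, g⟫ = ‖g‖ ^ 2 := by
    rw [← inner_sub_left, ← hg, real_inner_self_eq_norm_sq]
  rw [e1] at h1
  rw [e2, e3] at h2
  have hcc : c / 2 * (c⁻¹ ^ 2 * ‖g‖ ^ 2) = 1 / (2 * c) * ‖g‖ ^ 2 := by
    field_simp
  rw [hcc] at h2
  have hone : c⁻¹ * ‖g‖ ^ 2 - 1 / (2 * c) * ‖g‖ ^ 2 = 1 / (2 * c) * ‖g‖ ^ 2 := by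
    field_simp; ring
  have hmul : c⁻¹ * ⟪gradient f y, g⟫ - c⁻¹ * ⟪gradient f x, g⟫ = c⁻¹ * ‖g‖ ^ 2 := by
    rw [← mul_sub, e4]
  linarith [h1, h2, hmul, hone]

lemma cocoercive (f : E → ℝ) (hf : Differentiable ℝ f) (hconv : ConvexOn ℝ univ f)
    {c : ℝ} (hc : 0 < c)
    (hdesc : ∀ a b : E, f b ≤ f a + ⟪gradient f a, b - a⟫ + c / 2 * ‖b - a‖ ^ 2)
    (x y : E) :
    ‖gradient f x - gradient f y‖ ^ 2
      ≤ c * ⟪gradient f x - gradient f y, x - y⟫ := by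
  have h1 := lower_bound f hf hconv hc hdesc x y
  have h2 := lower_bound f hf hconv hc hdesc y x
  have e1 : ⟪gradient f x, y - x⟫ + ⟪gradient f y, x - y⟫
      = -⟪gradient f x - gradient f y, x - y⟫ := by
    rw [inner_sub_left]
    have : ⟪gradient f x, y - x⟫ = -⟪gradient f x, x - y⟫ := by
      rw [← inner_neg_right]; congr 1; abel
    rw [this]; ring
  have e2 : ‖gradient f x - gradient f y‖ = ‖gradient f y - gradient f x‖ :=
    norm_sub_rev _ _
  rw [e2]
  have h3 : (1 / c) * ‖gradient f y - gradient f x‖ ^ 2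
      ≤ ⟪gradient f x - gradient f y, x - y⟫ := by
    have hsum := add_le_add h1 h2
    have e3 : ‖gradient f x - gradient f y‖ = ‖gradient f y - gradient f x‖ := e2
    rw [e3] at hsum
    have hhalf : 1 / (2 * c) * ‖gradient f y - gradient f x‖ ^ 2
        + 1 / (2 * c) * ‖gradient f y - gradient f x‖ ^ 2
        = (1 / c) * ‖gradient f y - gradient f x‖ ^ 2 := by
      field_simp; ring
    linarith [hsum, e1, hhalf]
  have h4 := mul_le_mul_of_nonneg_left h3 hc.le
  have h5 : c * (1 / c * ‖gradient f y - gradient f x‖ ^ 2)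
      = ‖gradient f y - gradient f x‖ ^ 2 := by field_simp
  linarith [h4, h5]

lemma hasFDerivAt_q (μ : ℝ) (x : E) :
    HasFDerivAt (fun x : E => μ / 2 * ‖x‖ ^ 2)
      ((InnerProductSpace.toDual ℝ E) (μ • x)) x := by
  have h1 := (hasStrictFDerivAt_norm_sq x).hasFDerivAt
  have h2 := h1.const_mul (μ / 2)
  refine h2.congr_fderiv ?_
  ext v
  simp only [InnerProductSpace.toDual_apply_apply, ContinuousLinearMap.coe_smul', Pi.smul_apply,
    ContinuousLinearMap.smul_apply, innerSL_apply_apply, real_inner_smul_left, two_smul,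
    ContinuousLinearMap.add_apply, smul_eq_mul]
  ring

lemma diff_h (f : E → ℝ) (hf : Differentiable ℝ f) (μ : ℝ) :
    Differentiable ℝ (fun x : E => f x - μ / 2 * ‖x‖ ^ 2) :=
  fun x => ((hf x).sub (hasFDerivAt_q μ x).differentiableAt)

lemma gradient_h (f : E → ℝ) (hf : Differentiable ℝ f) (μ : ℝ) (x : E) :
    gradient (fun x : E => f x - μ / 2 * ‖x‖ ^ 2) x = gradient f x - μ • x := by
  have hq := hasFDerivAt_q (d := d) μ x
  have hfx : HasFDerivAt f ((InnerProductSpace.toDual ℝ E) (gradient f x)) x := by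
    have h := (hf x).hasGradientAt
    rwa [hasGradientAt_iff_hasFDerivAt] at h
  have hh := hfx.sub hq
  rw [← map_sub] at hh
  have := (hasGradientAt_iff_hasFDerivAt
    (f := fun x : E => f x - μ / 2 * ‖x‖ ^ 2)
    (f' := gradient f x - μ • x) (x := x)).2 hh
  exact this.gradient

lemma key_ineq (f : E → ℝ) {μ L : ℝ} (hμ : 0 < μ) (hμL : μ ≤ L)
    (hdiff : Differentiable ℝ f)
    (hsc : ConvexOn ℝ univ (fun x => f x - μ / 2 * ‖x‖ ^ 2))
    (hsm : LipschitzWith L.toNNReal (gradient f)) (x y : E) :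
    ‖gradient f x - gradient f y‖ ^ 2 + μ * L * ‖x - y‖ ^ 2
      ≤ (μ + L) * ⟪gradient f x - gradient f y, x - y⟫ := by
  have hL0 : 0 < L := lt_of_lt_of_le hμ hμL
  have hlip : ∀ a b : E, ‖gradient f a - gradient f b‖ ≤ L * ‖a - b‖ := by
    intro a b
    have := hsm.dist_le_mul a b
    rwa [dist_eq_norm, dist_eq_norm, Real.coe_toNNReal L hL0.le] at this
  set h : E → ℝ := fun x => f x - μ / 2 * ‖x‖ ^ 2 with hh
  have hdh : Differentiable ℝ h := diff_h f hdiff μ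
  have hgh : ∀ z : E, gradient h z = gradient f z - μ • z := gradient_h f hdiff μ
  set g : E := gradient f x - gradient f y with hgdef
  set u : E := x - y with hudef
  have hghxy : gradient h x - gradient h y = g - μ • u := by
    rw [hgh x, hgh y, hgdef, hudef, smul_sub]; abel
  have hgu_norm : ‖g‖ ≤ L * ‖u‖ := hlip x y
  -- strong monotonicity
  have hmono : μ * ‖u‖ ^ 2 ≤ ⟪g, u⟫ := by
    have h1 := grad_ineq h hdh hsc x y
    have h2 := grad_ineq h hdh hsc y x
    have e1 : ⟪gradient h x, y - x⟫ + ⟪gradient h y, x - y⟫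
        = -⟪gradient h x - gradient h y, x - y⟫ := by
      rw [inner_sub_left]
      have : ⟪gradient h x, y - x⟫ = -⟪gradient h x, x - y⟫ := by
        rw [← inner_neg_right]; congr 1; abel
      rw [this]; ring
    have e2 : ⟪gradient h x - gradient h y, x - y⟫ = ⟪g, u⟫ - μ * ‖u‖ ^ 2 := by
      rw [hghxy, inner_sub_left, real_inner_smul_left, real_inner_self_eq_norm_sq, hudef]
    linarith [h1, h2, e1, e2]
  rcases eq_or_lt_of_le hμL with heq | hlt
  · -- μ = L
    subst heq
    have h1 : ‖g‖ ^ 2 ≤ (μ * ‖u‖) ^ 2 := by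
      have := mul_self_le_mul_self (norm_nonneg g) hgu_norm
      nlinarith [this]
    nlinarith [hmono, h1, mul_le_mul_of_nonneg_left hmono hμ.le]
  · -- μ < L
    have hc : (0:ℝ) < L - μ := by linarith
    have hdesc_f := descent f hdiff hL0.le hlip
    have hdesc_h : ∀ a b : E, h b ≤ h a + ⟪gradient h a, b - a⟫
        + (L - μ) / 2 * ‖b - a‖ ^ 2 := by
      intro a b
      have hid : ‖b‖ ^ 2 = ‖a‖ ^ 2 + 2 * ⟪a, b - a⟫ + ‖b - a‖ ^ 2 := by
        have : b = a + (b - a) := by abel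
        nth_rewrite 1 [this]
        rw [norm_add_sq_real]
      have hdf := hdesc_f a b
      have e3 : ⟪gradient h a, b - a⟫ = ⟪gradient f a, b - a⟫ - μ * ⟪a, b - a⟫ := by
        rw [hgh a, inner_sub_left, real_inner_smul_left]
      simp only [hh] at *
      rw [e3]
      nlinarith [hdf, hid]
    have hco := cocoercive h hdh hsc hc hdesc_h x y
    rw [hghxy] at hco
    have e4 : ‖g - μ • u‖ ^ 2 = ‖g‖ ^ 2 - 2 * (μ * ⟪g, u⟫) + μ ^ 2 * ‖u‖ ^ 2 := by
      rw [norm_sub_sq_real, real_inner_smul_right, norm_smul, Real.norm_eq_abs, mul_pow, sq_abs]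
    have e5 : ⟪g - μ • u, x - y⟫ = ⟪g, u⟫ - μ * ‖u‖ ^ 2 := by
      rw [inner_sub_left, real_inner_smul_left, ← hudef, real_inner_self_eq_norm_sq]
    rw [e4, e5] at hco
    nlinarith [hco]

lemma contraction (f : E → ℝ) {μ L : ℝ} (hμ : 0 < μ) (hμL : μ ≤ L)
    (hdiff : Differentiable ℝ f)
    (hsc : ConvexOn ℝ univ (fun x => f x - μ / 2 * ‖x‖ ^ 2))
    (hsm : LipschitzWith L.toNNReal (gradient f))
    {β : ℝ} (hβ0 : 0 < β) (hβ : β ≤ 2 / (μ + L)) (x y : E) :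
    ‖x - y - β • (gradient f x - gradient f y)‖
      ≤ (1 - β * (μ * L / (μ + L))) * ‖x - y‖ := by
  have hL0 : 0 < L := lt_of_lt_of_le hμ hμL
  have hS : 0 < μ + L := by linarith
  have hβS : β * (μ + L) ≤ 2 := by
    rw [div_eq_mul_inv] at hβ
    calc β * (μ + L) ≤ 2 * (μ + L)⁻¹ * (μ + L) :=
          mul_le_mul_of_nonneg_right hβ hS.le
      _ = 2 := by field_simp
  have key := key_ineq f hμ hμL hdiff hsc hsm x y
  set g : E := gradient f x - gradient f y with hgdef
  set u : E := x - y with hudef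
  set G := ‖g‖ ^ 2 with hG
  set U := ‖u‖ ^ 2 with hU
  set I := ⟪g, u⟫ with hI
  have hexp : ‖u - β • g‖ ^ 2 = U - 2 * (β * I) + β ^ 2 * G := by
    rw [norm_sub_sq_real, real_inner_smul_right, norm_smul, Real.norm_eq_abs, mul_pow, sq_abs]
    rw [hI, hG, hU, real_inner_comm u g]
  have hsq : (μ + L) ^ 2 * ‖u - β • g‖ ^ 2 ≤ ((μ + L) - β * (μ * L)) ^ 2 * U := by
    rw [hexp]
    have h2 := mul_le_mul_of_nonneg_left key (by positivity : (0:ℝ) ≤ 2 * β * (μ + L))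
    have h4 : 0 ≤ β * (μ + L) * (G * (2 - β * (μ + L))) := by
      apply mul_nonneg (by positivity)
      apply mul_nonneg (by positivity)
      linarith
    have h5 : 0 ≤ β ^ 2 * μ ^ 2 * L ^ 2 * U := by positivity
    nlinarith [h2, h4, h5]
  have hfacpos : 0 ≤ (μ + L) - β * (μ * L) := by
    nlinarith [hβS, sq_nonneg (μ - L), hS, hμ, hL0, hβ0]
  have hnorm : (μ + L) * ‖u - β • g‖ ≤ ((μ + L) - β * (μ * L)) * ‖u‖ := by
    have hl : 0 ≤ (μ + L) * ‖u - β • g‖ := by positivity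
    have hr : 0 ≤ ((μ + L) - β * (μ * L)) * ‖u‖ := mul_nonneg hfacpos (norm_nonneg _)
    apply le_of_pow_le_pow_left₀ two_ne_zero hr
    calc ((μ + L) * ‖u - β • g‖) ^ 2 = (μ + L) ^ 2 * ‖u - β • g‖ ^ 2 := by ring
      _ ≤ ((μ + L) - β * (μ * L)) ^ 2 * U := hsq
      _ = (((μ + L) - β * (μ * L)) * ‖u‖) ^ 2 := by rw [hU]; ring
  have heq : (1 - β * (μ * L / (μ + L))) = ((μ + L) - β * (μ * L)) / (μ + L) := by
    field_simp
  rw [heq, div_mul_eq_mul_div, le_div_iff₀ hS]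
  calc ‖u - β • g‖ * (μ + L) = (μ + L) * ‖u - β • g‖ := by ring
    _ ≤ ((μ + L) - β * (μ * L)) * ‖u‖ := hnorm

lemma fac_nonneg {μ L β : ℝ} (hμ : 0 < μ) (hμL : μ ≤ L) (hβ : β ≤ 2 / (μ + L)) :
    0 ≤ 1 - β * (μ * L / (μ + L)) := by
  have hL0 : 0 < L := lt_of_lt_of_le hμ hμL
  have hS : 0 < μ + L := by linarith
  have h1 : β * (μ * L) ≤ 2 / (μ + L) * (μ * L) :=
    mul_le_mul_of_nonneg_right hβ (by positivity)
  have h2 : 2 / (μ + L) * (μ * L) ≤ μ + L := by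
    rw [div_mul_eq_mul_div, div_le_iff₀ hS]
    nlinarith [sq_nonneg (μ - L)]
  rw [sub_nonneg, mul_div_assoc']
  rw [div_le_one hS]
  linarith

theorem stmt_6 {n d : ℕ} (hn : 0 < n)
    (f : Fin n → EuclideanSpace ℝ (Fin d) → ℝ)
    (μ L : Fin n → ℝ) (π : Fin n → ℝ) (α : ℝ)
    (hμ : ∀ k, 0 < μ k) (hμL : ∀ k, μ k ≤ L k)
    (hdiff : ∀ k, Differentiable ℝ (f k))
    (hsc : ∀ k, ConvexOn ℝ Set.univ (fun x => f k x - μ k / 2 * ‖x‖ ^ 2))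
    (hsm : ∀ k, LipschitzWith (L k).toNNReal (gradient (f k)))
    (hπ_pos : ∀ k, 0 < π k)
    (hα0 : 0 < α) (hα : α ≤ ⨅ k, 2 * n * π k / (μ k + L k)) :
    ∀ w v : Fin n → EuclideanSpace ℝ (Fin d),
      Real.sqrt (∑ k, (1 / π k) *
          ‖w k - v k - α • (gradient (f k) ((1 / (n * π k)) • w k) -
              gradient (f k) ((1 / (n * π k)) • v k))‖ ^ 2) ≤
        (1 - (⨅ k, μ k * L k / (n * π k * (μ k + L k))) * α) *
          Real.sqrt (∑ k, (1 / π k) * ‖w k - v k‖ ^ 2) := by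
  intro w v
  have hne : Nonempty (Fin n) := Fin.pos_iff_nonempty.mp hn
  have hn' : (0:ℝ) < n := by exact_mod_cast hn
  set C := ⨅ k, μ k * L k / (↑n * π k * (μ k + L k)) with hC
  have hCle : ∀ k, C ≤ μ k * L k / (↑n * π k * (μ k + L k)) := fun k =>
    ciInf_le (Set.Finite.bddBelow (Set.finite_range _)) k
  have hαk : ∀ k, α ≤ 2 * ↑n * π k / (μ k + L k) := fun k =>
    le_trans hα (ciInf_le (Set.Finite.bddBelow (Set.finite_range _)) k)
  have hμLpos : ∀ k, 0 < μ k + L k := fun k => by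
    have := hμ k; have := lt_of_lt_of_le (hμ k) (hμL k); linarith
  have hP : ∀ k, (0:ℝ) < ↑n * π k := fun k => mul_pos hn' (hπ_pos k)
  -- per-coordinate data
  have hβ2 : ∀ k, α * (1 / (↑n * π k)) ≤ 2 / (μ k + L k) := by
    intro k
    rw [mul_one_div, div_le_div_iff₀ (hP k) (hμLpos k)]
    have := (le_div_iff₀ (hμLpos k)).1 (hαk k)
    calc α * (μ k + L k) ≤ 2 * ↑n * π k := this
      _ = 2 * (↑n * π k) := by ring
  have hCkeq : ∀ k, (1 / (↑n * π k)) * (μ k * L k / (μ k + L k))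
      = μ k * L k / (↑n * π k * (μ k + L k)) := by
    intro k
    field_simp
  have hfack : ∀ k, 0 ≤ 1 - α * (μ k * L k / (↑n * π k * (μ k + L k))) := by
    intro k
    have := fac_nonneg (hμ k) (hμL k) (hβ2 k)
    rwa [mul_assoc, hCkeq k] at this
  have h1Cα : 0 ≤ 1 - C * α := by
    obtain ⟨k₀⟩ := hne
    have h1 := hfack k₀
    have h2 : C * α ≤ μ k₀ * L k₀ / (↑n * π k₀ * (μ k₀ + L k₀)) * α :=
      mul_le_mul_of_nonneg_right (hCle k₀) hα0.le
    nlinarith [h1, h2]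
  have hcoord : ∀ k, ‖w k - v k - α • (gradient (f k) ((1 / (↑n * π k)) • w k) -
      gradient (f k) ((1 / (↑n * π k)) • v k))‖ ≤ (1 - C * α) * ‖w k - v k‖ := by
    intro k
    set s : ℝ := 1 / (↑n * π k) with hs
    have hs0 : 0 < s := by rw [hs]; exact one_div_pos.mpr (hP k)
    set x := s • w k with hx
    set y := s • v k with hy
    have hcontr := contraction (f k) (hμ k) (hμL k) (hdiff k) (hsc k) (hsm k)
      (mul_pos hα0 hs0) (hβ2 k) x y
    set g := gradient (f k) x - gradient (f k) y with hg
    have hPs : (↑n * π k) * s = 1 := by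
      rw [hs, mul_one_div]; exact div_self (hP k).ne'
    have h1 : (↑n * π k) • x = w k := by rw [hx, smul_smul, hPs, one_smul]
    have h2 : (↑n * π k) • y = v k := by rw [hy, smul_smul, hPs, one_smul]
    have h3 : (↑n * π k) * (α * s) = α := by
      rw [mul_comm α s, ← mul_assoc, hPs, one_mul]
    have hdecomp : (↑n * π k) • (x - y - (α * s) • g) = w k - v k - α • g := by
      rw [smul_sub, smul_sub, smul_smul, smul_smul, smul_smul, hPs, h3, one_smul, one_smul]
    have hxy : ‖x - y‖ = s * ‖w k - v k‖ := by
      rw [hx, hy, ← smul_sub, norm_smul, Real.norm_eq_abs, abs_of_pos hs0]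
    rw [← hdecomp, norm_smul, Real.norm_eq_abs, abs_of_pos (hP k)]
    calc (↑n * π k) * ‖x - y - (α * s) • g‖
        ≤ (↑n * π k) * ((1 - α * s * (μ k * L k / (μ k + L k))) * ‖x - y‖) :=
          mul_le_mul_of_nonneg_left hcontr (hP k).le
      _ = (↑n * π k) * s * ((1 - α * s * (μ k * L k / (μ k + L k))) * ‖w k - v k‖) := by
          rw [hxy]; ring
      _ = (1 - α * (μ k * L k / (↑n * π k * (μ k + L k)))) * ‖w k - v k‖ := by
          rw [hPs, one_mul, mul_assoc, hCkeq k]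
      _ ≤ (1 - C * α) * ‖w k - v k‖ := by
          apply mul_le_mul_of_nonneg_right _ (norm_nonneg _)
          have h2 : C * α ≤ μ k * L k / (↑n * π k * (μ k + L k)) * α :=
            mul_le_mul_of_nonneg_right (hCle k) hα0.le
          nlinarith [h2]
  have hsum : ∑ k, (1 / π k) * ‖w k - v k - α • (gradient (f k) ((1 / (↑n * π k)) • w k) -
      gradient (f k) ((1 / (↑n * π k)) • v k))‖ ^ 2
      ≤ (1 - C * α) ^ 2 * ∑ k, (1 / π k) * ‖w k - v k‖ ^ 2 := by
    rw [Finset.mul_sum]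
    apply Finset.sum_le_sum
    intro k _
    have h1 : ‖w k - v k - α • (gradient (f k) ((1 / (↑n * π k)) • w k) -
        gradient (f k) ((1 / (↑n * π k)) • v k))‖ ^ 2
        ≤ ((1 - C * α) * ‖w k - v k‖) ^ 2 :=
      pow_le_pow_left₀ (norm_nonneg _) (hcoord k) 2
    have hπk : (0:ℝ) < 1 / π k := by have := hπ_pos k; positivity
    calc (1 / π k) * ‖w k - v k - α • (gradient (f k) ((1 / (↑n * π k)) • w k) -
        gradient (f k) ((1 / (↑n * π k)) • v k))‖ ^ 2
        ≤ (1 / π k) * ((1 - C * α) * ‖w k - v k‖) ^ 2 :=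
          mul_le_mul_of_nonneg_left h1 hπk.le
      _ = (1 - C * α) ^ 2 * ((1 / π k) * ‖w k - v k‖ ^ 2) := by ring
  calc Real.sqrt (∑ k, (1 / π k) * ‖w k - v k - α • (gradient (f k) ((1 / (↑n * π k)) • w k) -
      gradient (f k) ((1 / (↑n * π k)) • v k))‖ ^ 2)
      ≤ Real.sqrt ((1 - C * α) ^ 2 * ∑ k, (1 / π k) * ‖w k - v k‖ ^ 2) :=
        Real.sqrt_le_sqrt hsum
    _ = (1 - C * α) * Real.sqrt (∑ k, (1 / π k) * ‖w k - v k‖ ^ 2) := by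
        rw [Real.sqrt_mul (sq_nonneg _), Real.sqrt_sq h1Cα]
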